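/- arXiv:1307.3532 — 3 statements merged into one kernel-verified Lean document; each statement's English description precedes it below -/
import Mathlib

section
/- Let d ≥ 3 and f ∈ ℛ_d. Then M_f is closed under matrix multiplication (hence, being a K-linear subspace of Mat_r(K) containing the identity matrix, it is a K-subalgebra of Mat_r(K)), and every commutator satisfies (AB − BA)·∂f = 0 for A, B ∈ M_f, i.e., (AB−BA)∂ applied entrywise to f gives the zero vector. In particular, if ann_R(f)_1 = 0, then M_f is commutative. -/
open MvPolynomial

namespace Kleppe

noncomputable section

open scoped Classical

variable {K : Type*}

/-- The iterated partial-derivative operator `∂^β` applied to `f`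
(in the standard polynomial ring; char 0 identification of divided powers). -/
def derivMulti [CommSemiring K] {r : ℕ} (β : Fin r →₀ ℕ) (f : MvPolynomial (Fin r) K) :
    MvPolynomial (Fin r) K :=
  ∑ α ∈ f.support,
    if β ≤ α then
      MvPolynomial.monomial (α - β)
        ((∏ i : Fin r, (α i).descFactorial (β i)) • MvPolynomial.coeff α f)
    else 0

/-- The apolarity action `D(f)` of a differential operator `D ∈ R = K[∂_1,…,∂_r]`
on a polynomial `f ∈ ℛ = K[x_1,…,x_r]`; `∂_i` acts as `∂/∂x_i`. -/
def contract [CommSemiring K] {r : ℕ} (D f : MvPolynomial (Fin r) K) :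
    MvPolynomial (Fin r) K :=
  ∑ β ∈ D.support, MvPolynomial.coeff β D • derivMulti β f

/-- `(A∂)_i = Σ_k A_{ik} ∂_k`, as an element of `R`. -/
def rowOp [CommSemiring K] {r : ℕ} (A : Matrix (Fin r) (Fin r) K) (i : Fin r) :
    MvPolynomial (Fin r) K :=
  ∑ k : Fin r, A i k • X k

/-- The matrix space `M_f = {A | ∂_i·(A∂)_j − ∂_j·(A∂)_i ∈ ann_R f for all i,j}`. -/
def Mf [CommRing K] {r : ℕ} (f : MvPolynomial (Fin r) K) :
    Set (Matrix (Fin r) (Fin r) K) :=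
  {A | ∀ i j : Fin r, contract (X i * rowOp A j - X j * rowOp A i) f = 0}

/-- `γ_f(A)`: the unique homogeneous `g` of degree `d` with `∂_i g = (A∂)_i (f)` for all `i`
(defined by choice; junk value `0` if no such `g` exists). -/
def gammaf [CommRing K] {r : ℕ} (d : ℕ) (f : MvPolynomial (Fin r) K)
    (A : Matrix (Fin r) (Fin r) K) : MvPolynomial (Fin r) K :=
  if h : ∃ g : MvPolynomial (Fin r) K, g.IsHomogeneous d ∧
      ∀ i, contract (X i) g = contract (rowOp A i) f then h.choose else 0

/-- `R_e(g)`, the space of contractions of `g` by homogeneous operators of degree `e`. -/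
def partials [CommRing K] {r : ℕ} (e : ℕ) (g : MvPolynomial (Fin r) K) :
    Submodule K (MvPolynomial (Fin r) K) :=
  Submodule.span K {p | ∃ D : MvPolynomial (Fin r) K, D.IsHomogeneous e ∧ p = contract D g}

/-- `G` is (the set of components of) a regular splitting of `f`:
`f = Σ_{g ∈ G} g`, each `g` a nonzero degree-`d` form, and the spaces of
`(d−1)`-st partials `R_{d−1}(g)` are independent. -/
def IsRegSplit [CommRing K] {r : ℕ} (d : ℕ) (f : MvPolynomial (Fin r) K)
    (G : Set (MvPolynomial (Fin r) K)) : Prop :=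
  G.Finite ∧ G.Nonempty ∧ (∀ g ∈ G, g ≠ 0 ∧ g.IsHomogeneous d) ∧ (∑ᶠ g ∈ G, g) = f ∧
  ∀ g ∈ G, Disjoint (partials (d - 1) g) (⨆ h ∈ G \ {g}, partials (d - 1) h)

/-- A complete set of orthogonal idempotents in `M_f`. -/
def IsCoid [CommRing K] {r : ℕ} (f : MvPolynomial (Fin r) K)
    (E : Set (Matrix (Fin r) (Fin r) K)) : Prop :=
  E.Finite ∧ E ⊆ Mf f ∧ (∀ A ∈ E, A ≠ 0) ∧
  (∀ A ∈ E, ∀ B ∈ E, A ≠ B → A * B = 0) ∧ (∑ᶠ A ∈ E, A) = 1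

end


noncomputable section AuxProofs

open scoped Classical

/-! ### Auxiliary lemmas for the proof of `Mf_mul_closed`. -/

private lemma dF_add' (n b g : ℕ) :
    (n + b + g).descFactorial (b + g) =
      (n + b).descFactorial b * (n + b + g).descFactorial g := by
  induction g with
  | zero => simp
  | succ g ih =>
      have h1 : n + b + (g + 1) = (n + b + g) + 1 := by ring
      rw [h1, ← add_assoc, Nat.succ_descFactorial_succ, Nat.succ_descFactorial_succ, ih]
      ring

theorem coeff_derivMulti {K : Type*} [CommSemiring K] {r : ℕ} (β γ : Fin r →₀ ℕ)
    (f : MvPolynomial (Fin r) K) :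
    coeff γ (derivMulti β f) =
      (∏ i : Fin r, ((γ + β) i).descFactorial (β i)) • coeff (γ + β) f := by
  unfold derivMulti
  rw [MvPolynomial.coeff_sum]
  have : ∀ α ∈ f.support,
      coeff γ (if β ≤ α then
        MvPolynomial.monomial (α - β)
          ((∏ i : Fin r, (α i).descFactorial (β i)) • MvPolynomial.coeff α f) else 0)
      = if α = γ + β then (∏ i : Fin r, ((γ + β) i).descFactorial (β i)) • coeff (γ + β) f
        else 0 := by
    intro α _
    by_cases h : β ≤ α
    · rw [if_pos h, MvPolynomial.coeff_monomial]
      by_cases h2 : α = γ + β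
      · subst h2
        rw [if_pos (by simp), if_pos rfl]
      · rw [if_neg, if_neg h2]
        intro hc
        exact h2 (by rw [← hc, tsub_add_cancel_of_le h])
    · rw [if_neg h, if_neg]
      · simp
      · rintro rfl
        exact h le_add_self
  rw [Finset.sum_congr rfl this, Finset.sum_ite_eq' f.support (γ + β)]
  by_cases hm : γ + β ∈ f.support
  · rw [if_pos hm]
  · rw [if_neg hm]
    rw [MvPolynomial.notMem_support_iff.mp hm, smul_zero]

theorem derivMulti_comp {K : Type*} [CommSemiring K] {r : ℕ} (β γ : Fin r →₀ ℕ)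
    (f : MvPolynomial (Fin r) K) :
    derivMulti (β + γ) f = derivMulti β (derivMulti γ f) := by
  ext δ
  rw [coeff_derivMulti, coeff_derivMulti, coeff_derivMulti]
  rw [smul_smul, add_assoc]
  congr 1
  rw [← Finset.prod_mul_distrib]
  apply Finset.prod_congr rfl
  intro i _
  simp only [Finsupp.add_apply]
  rw [← add_assoc]
  exact dF_add' (δ i) (β i) (γ i)

theorem derivMulti_addf {K : Type*} [CommSemiring K] {r : ℕ} (β : Fin r →₀ ℕ)
    (f g : MvPolynomial (Fin r) K) :
    derivMulti β (f + g) = derivMulti β f + derivMulti β g := by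
  ext δ; simp [coeff_derivMulti, coeff_add, smul_add]

theorem contract_eq_sum {K : Type*} [CommSemiring K] {r : ℕ} (D f : MvPolynomial (Fin r) K) :
    contract D f = Finsupp.sum (AddMonoidAlgebra.coeff D) fun β c => c • derivMulti β f := by
  rw [MvPolynomial.sum_def]; rfl

/-- `pd i` : partial derivative with respect to variable `i`, as contraction. -/
def pd {K : Type*} [CommSemiring K] {r : ℕ} (i : Fin r) (f : MvPolynomial (Fin r) K) :
    MvPolynomial (Fin r) K := derivMulti (Finsupp.single i 1) f

theorem coeff_pd {K : Type*} [CommSemiring K] {r : ℕ} (i : Fin r) (γ : Fin r →₀ ℕ)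
    (f : MvPolynomial (Fin r) K) :
    coeff γ (pd i f) = (γ i + 1) • coeff (γ + Finsupp.single i 1) f := by
  rw [pd, coeff_derivMulti]
  congr 1
  rw [Finset.prod_eq_single i]
  · simp
  · intro j _ hj; simp [Finsupp.single_apply, Ne.symm hj]
  · simp

theorem pd_comm {K : Type*} [CommSemiring K] {r : ℕ} (i j : Fin r)
    (f : MvPolynomial (Fin r) K) :
    pd i (pd j f) = pd j (pd i f) := by
  simp only [pd, ← derivMulti_comp]
  rw [add_comm]

theorem pd_add {K : Type*} [CommSemiring K] {r : ℕ} (i : Fin r)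
    (f g : MvPolynomial (Fin r) K) :
    pd i (f + g) = pd i f + pd i g := derivMulti_addf _ f g

theorem pd_smul {K : Type*} [CommSemiring K] {r : ℕ} (i : Fin r) (c : K)
    (f : MvPolynomial (Fin r) K) :
    pd i (c • f) = c • pd i f := by
  ext δ; simp only [coeff_pd, coeff_smul, smul_eq_mul, nsmul_eq_mul]; ring

theorem pd_zero {K : Type*} [CommSemiring K] {r : ℕ} (i : Fin r) :
    pd i (0 : MvPolynomial (Fin r) K) = 0 := by
  ext δ; simp [coeff_pd]

theorem pd_sub {K : Type*} [CommRing K] {r : ℕ} (i : Fin r) (f g : MvPolynomial (Fin r) K) :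
    pd i (f - g) = pd i f - pd i g := by
  ext δ; simp [coeff_pd, coeff_sub, smul_sub]

theorem pd_sum {K : Type*} [CommSemiring K] {r : ℕ} (i : Fin r) {ι : Type*} (s : Finset ι)
    (g : ι → MvPolynomial (Fin r) K) :
    pd i (∑ k ∈ s, g k) = ∑ k ∈ s, pd i (g k) := by
  classical
  induction s using Finset.induction with
  | empty => simp [pd_zero]
  | insert _ _ h ih => rw [Finset.sum_insert h, Finset.sum_insert h, pd_add, ih]

theorem isHomogeneous_iff' {K : Type*} [CommSemiring K] {r : ℕ}
    {φ : MvPolynomial (Fin r) K} {n : ℕ} :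
    φ.IsHomogeneous n ↔ ∀ d, coeff d φ ≠ 0 → Finsupp.degree d = n := by
  simp only [MvPolynomial.IsHomogeneous, IsWeightedHomogeneous, Finsupp.degree_eq_weight_one]
  exact Iff.rfl

theorem degree_add_single {r : ℕ} (γ : Fin r →₀ ℕ) (i : Fin r) :
    Finsupp.degree (γ + Finsupp.single i 1) = Finsupp.degree γ + 1 := by
  rw [Finsupp.degree_eq_weight_one]
  rw [map_add, ← Finsupp.degree_eq_weight_one]
  congr 1
  simp [Finsupp.degree, Finsupp.support_single_ne_zero i one_ne_zero]
  exact Finsupp.degree_single i 1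

theorem pd_isHomogeneous {K : Type*} [CommSemiring K] {r : ℕ} {i : Fin r}
    {f : MvPolynomial (Fin r) K} {n : ℕ} (hf : f.IsHomogeneous n) :
    (pd i f).IsHomogeneous (n - 1) := by
  rw [isHomogeneous_iff'] at hf ⊢
  intro d hd
  rw [coeff_pd] at hd
  have h2 : coeff (d + Finsupp.single i 1) f ≠ 0 := by
    intro h; rw [h, smul_zero] at hd; exact hd rfl
  have := hf _ h2
  rw [degree_add_single] at this
  omega

/-- A homogeneous polynomial of positive degree with vanishing partials is zero. -/
theorem eq_zero_of_pd_eq_zero {K : Type*} [Field K] [CharZero K] {r : ℕ}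
    {f : MvPolynomial (Fin r) K} {n : ℕ} (hn : n ≠ 0) (hf : f.IsHomogeneous n)
    (h : ∀ i, pd i f = 0) : f = 0 := by
  rw [isHomogeneous_iff'] at hf
  ext α
  rw [coeff_zero]
  by_contra hc
  have hdeg := hf α hc
  have : ∃ i, α i ≠ 0 := by
    by_contra hall
    push_neg at hall
    have : α = 0 := Finsupp.ext fun i => hall i
    rw [this, map_zero] at hdeg
    exact hn hdeg.symm
  obtain ⟨i, hi⟩ := this
  have hle : Finsupp.single i 1 ≤ α := by
    rw [Finsupp.single_le_iff]; omega
  have key := coeff_pd i (α - Finsupp.single i 1) f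
  rw [tsub_add_cancel_of_le hle, h i, coeff_zero] at key
  have key2 := key.symm
  rw [nsmul_eq_mul, mul_eq_zero] at key2
  rcases key2 with h1 | h2
  · have := Nat.cast_eq_zero.mp h1
    omega
  · exact hc h2

theorem contract_zero_left {K : Type*} [CommSemiring K] {r : ℕ} (f : MvPolynomial (Fin r) K) :
    contract 0 f = 0 := by
  rw [contract_eq_sum, AddMonoidAlgebra.coeff_zero, Finsupp.sum_zero_index]

theorem contract_add_left {K : Type*} [CommSemiring K] {r : ℕ}
    (D E f : MvPolynomial (Fin r) K) :
    contract (D + E) f = contract D f + contract E f := by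
  rw [contract_eq_sum, contract_eq_sum, contract_eq_sum]
  exact Finsupp.sum_add_index' (fun β => zero_smul K _) (fun β c₁ c₂ => add_smul c₁ c₂ _)

theorem contract_sub_left {K : Type*} [CommRing K] {r : ℕ} (D E f : MvPolynomial (Fin r) K) :
    contract (D - E) f = contract D f - contract E f := by
  rw [contract_eq_sum, contract_eq_sum, contract_eq_sum]
  exact Finsupp.sum_sub_index (fun β c₁ c₂ => sub_smul c₁ c₂ _)

theorem contract_monomial {K : Type*} [CommSemiring K] {r : ℕ} (β : Fin r →₀ ℕ) (c : K)
    (f : MvPolynomial (Fin r) K) :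
    contract (monomial β c) f = c • derivMulti β f := by
  rw [contract_eq_sum]
  exact Finsupp.sum_single_index (zero_smul K _)

theorem contract_finsetSum {K : Type*} [CommSemiring K] {r : ℕ} {ι : Type*} (s : Finset ι)
    (D : ι → MvPolynomial (Fin r) K) (f : MvPolynomial (Fin r) K) :
    contract (∑ k ∈ s, D k) f = ∑ k ∈ s, contract (D k) f := by
  classical
  induction s using Finset.induction with
  | empty => simp [contract_zero_left]
  | insert _ _ h ih => rw [Finset.sum_insert h, Finset.sum_insert h, contract_add_left, ih]

theorem rowOp_eq {K : Type*} [CommSemiring K] {r : ℕ} (A : Matrix (Fin r) (Fin r) K)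
    (i : Fin r) :
    rowOp A i = ∑ k : Fin r, monomial (Finsupp.single k 1) (A i k) := by
  unfold rowOp
  apply Finset.sum_congr rfl
  intro k _
  rw [X, smul_monomial, smul_eq_mul, mul_one]

theorem contract_rowOp {K : Type*} [CommSemiring K] {r : ℕ} (A : Matrix (Fin r) (Fin r) K)
    (i : Fin r) (f : MvPolynomial (Fin r) K) :
    contract (rowOp A i) f = ∑ k : Fin r, A i k • pd k f := by
  rw [rowOp_eq, contract_finsetSum]
  exact Finset.sum_congr rfl fun k _ => contract_monomial _ _ _

theorem contract_X_mul_rowOp {K : Type*} [CommSemiring K] {r : ℕ}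
    (A : Matrix (Fin r) (Fin r) K) (i j : Fin r) (f : MvPolynomial (Fin r) K) :
    contract (X i * rowOp A j) f = ∑ k : Fin r, A j k • pd i (pd k f) := by
  rw [rowOp_eq, Finset.mul_sum]
  have : ∀ k : Fin r, (X i : MvPolynomial (Fin r) K) * monomial (Finsupp.single k 1) (A j k)
      = monomial (Finsupp.single i 1 + Finsupp.single k 1) (A j k) := by
    intro k
    rw [X, monomial_mul, one_mul]
  rw [Finset.sum_congr rfl fun k _ => this k, contract_finsetSum]
  apply Finset.sum_congr rfl
  intro k _
  rw [contract_monomial, derivMulti_comp]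
  rfl

theorem mem_Mf_iff {K : Type*} [CommRing K] {r : ℕ} (f : MvPolynomial (Fin r) K)
    (A : Matrix (Fin r) (Fin r) K) :
    A ∈ Mf f ↔ ∀ i j : Fin r,
      ∑ k : Fin r, A j k • pd i (pd k f) = ∑ k : Fin r, A i k • pd j (pd k f) := by
  unfold Mf
  simp only [Set.mem_setOf_eq]
  constructor
  · intro h i j
    have := h i j
    rw [contract_sub_left, contract_X_mul_rowOp, contract_X_mul_rowOp, sub_eq_zero] at this
    exact this
  · intro h i j
    rw [contract_sub_left, contract_X_mul_rowOp, contract_X_mul_rowOp, sub_eq_zero]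
    exact h i j

/-- `(A∂)_i` applied to `f`. -/
def Lop {K : Type*} [CommSemiring K] {r : ℕ} (A : Matrix (Fin r) (Fin r) K) (i : Fin r)
    (f : MvPolynomial (Fin r) K) : MvPolynomial (Fin r) K :=
  ∑ k : Fin r, A i k • pd k f

theorem pd_Lop {K : Type*} [CommSemiring K] {r : ℕ} (A : Matrix (Fin r) (Fin r) K)
    (i j : Fin r) (f : MvPolynomial (Fin r) K) :
    pd i (Lop A j f) = ∑ k : Fin r, A j k • pd i (pd k f) := by
  rw [Lop, pd_sum]
  exact Finset.sum_congr rfl fun k _ => pd_smul _ _ _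

theorem Lop_pd {K : Type*} [CommSemiring K] {r : ℕ} (A : Matrix (Fin r) (Fin r) K)
    (i j : Fin r) (f : MvPolynomial (Fin r) K) :
    Lop A i (pd j f) = pd j (Lop A i f) := by
  rw [pd_Lop, Lop]
  exact Finset.sum_congr rfl fun k _ => by rw [pd_comm]

theorem Lop_Lop_expand {K : Type*} [CommSemiring K] {r : ℕ}
    (A B : Matrix (Fin r) (Fin r) K) (i j : Fin r) (f : MvPolynomial (Fin r) K) :
    Lop A i (Lop B j f) = ∑ k : Fin r, ∑ l : Fin r, (A i k * B j l) • pd k (pd l f) := by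
  rw [Lop]
  apply Finset.sum_congr rfl
  intro k _
  rw [pd_Lop, Finset.smul_sum]
  exact Finset.sum_congr rfl fun l _ => by rw [smul_smul]

theorem Lop_Lop_comm {K : Type*} [CommSemiring K] {r : ℕ}
    (A B : Matrix (Fin r) (Fin r) K) (i j : Fin r) (f : MvPolynomial (Fin r) K) :
    Lop A i (Lop B j f) = Lop B j (Lop A i f) := by
  rw [Lop_Lop_expand, Lop_Lop_expand, Finset.sum_comm]
  apply Finset.sum_congr rfl
  intro l _
  apply Finset.sum_congr rfl
  intro k _
  rw [mul_comm, pd_comm]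

theorem Lop_isHomogeneous {K : Type*} [CommSemiring K] {r : ℕ}
    (A : Matrix (Fin r) (Fin r) K) (i : Fin r)
    {f : MvPolynomial (Fin r) K} {n : ℕ} (hf : f.IsHomogeneous n) :
    (Lop A i f).IsHomogeneous (n - 1) := by
  rw [← mem_homogeneousSubmodule]
  apply Submodule.sum_mem
  intro k _
  exact Submodule.smul_mem _ _
    ((mem_homogeneousSubmodule (n - 1) (pd k f)).mpr (pd_isHomogeneous hf))

theorem sym1 {K : Type*} [CommSemiring K] {r : ℕ} (B : Matrix (Fin r) (Fin r) K)
    {f : MvPolynomial (Fin r) K}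
    (hB : ∀ i j, pd i (Lop B j f) = pd j (Lop B i f)) (j k : Fin r) :
    Lop B j (pd k f) = Lop B k (pd j f) := by
  rw [Lop_pd, Lop_pd]
  exact hB k j

theorem U_swap13 {K : Type*} [CommSemiring K] {r : ℕ} (A B : Matrix (Fin r) (Fin r) K)
    {f : MvPolynomial (Fin r) K}
    (hA : ∀ i j, pd i (Lop A j f) = pd j (Lop A i f)) (i j k : Fin r) :
    Lop A i (Lop B j (pd k f)) = Lop A k (Lop B j (pd i f)) := by
  rw [Lop_Lop_comm A B i j (pd k f), Lop_Lop_comm A B k j (pd i f)]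
  congr 1
  rw [Lop_pd, Lop_pd]
  exact hA k i

theorem U_full {K : Type*} [CommSemiring K] {r : ℕ} (A B : Matrix (Fin r) (Fin r) K)
    {f : MvPolynomial (Fin r) K}
    (hA : ∀ i j, pd i (Lop A j f) = pd j (Lop A i f))
    (hB : ∀ i j, pd i (Lop B j f) = pd j (Lop B i f)) (i j k : Fin r) :
    Lop A i (Lop B j (pd k f)) = Lop A j (Lop B i (pd k f)) := by
  rw [U_swap13 A B hA i j k]
  rw [congrArg (Lop A k) (sym1 B hB j i)]
  rw [U_swap13 A B hA k i j]

theorem S_symm {K : Type*} [Field K] [CharZero K] {r d : ℕ} (hd : 3 ≤ d)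
    {f : MvPolynomial (Fin r) K} (hf : f.IsHomogeneous d)
    (A B : Matrix (Fin r) (Fin r) K)
    (hA : ∀ i j, pd i (Lop A j f) = pd j (Lop A i f))
    (hB : ∀ i j, pd i (Lop B j f) = pd j (Lop B i f)) (i j : Fin r) :
    Lop A i (Lop B j f) = Lop A j (Lop B i f) := by
  rw [← sub_eq_zero]
  apply eq_zero_of_pd_eq_zero (n := d - 1 - 1) (by omega)
  · exact ((Lop_isHomogeneous A i (Lop_isHomogeneous B j hf)).sub
      (Lop_isHomogeneous A j (Lop_isHomogeneous B i hf)))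
  · intro k
    rw [pd_sub, ← Lop_pd, ← Lop_pd, ← Lop_pd, ← Lop_pd,
      U_full A B hA hB i j k, sub_self]

theorem pd_Lop_mul {K : Type*} [CommSemiring K] {r : ℕ} (A B : Matrix (Fin r) (Fin r) K)
    {f : MvPolynomial (Fin r) K}
    (hB : ∀ i j, pd i (Lop B j f) = pd j (Lop B i f)) (m i : Fin r) :
    pd m (Lop (A * B) i f) = Lop A i (Lop B m f) := by
  have step1 : Lop (A * B) i f = ∑ l : Fin r, A i l • Lop B l f := by
    rw [Lop]
    simp only [Matrix.mul_apply, Finset.sum_smul]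
    rw [Finset.sum_comm]
    apply Finset.sum_congr rfl
    intro l _
    rw [Lop, Finset.smul_sum]
    exact Finset.sum_congr rfl fun k _ => (mul_smul _ _ _)
  rw [step1, pd_sum]
  rw [Lop]
  apply Finset.sum_congr rfl
  intro l _
  rw [pd_smul, hB m l]

end AuxProofs

/-- Proposition 2.11. Let `d ≥ 3` and `f ∈ ℛ_d`. Then `M_f` is closed
under matrix multiplication, every commutator `AB − BA` of elements of `M_f` satisfies
`(AB − BA)∂f = 0` entrywise, and if `ann_R(f)_1 = 0` then `M_f` is commutative. -/
theorem Mf_mul_closed {K : Type*} [Field K] [CharZero K] {r d : ℕ} (hd : 3 ≤ d)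
    (f : MvPolynomial (Fin r) K) (hf : f.IsHomogeneous d) :
    (∀ A ∈ Mf f, ∀ B ∈ Mf f, A * B ∈ Mf f) ∧
    (∀ A ∈ Mf f, ∀ B ∈ Mf f, ∀ i, contract (rowOp (A * B - B * A) i) f = 0) ∧
    ((∀ D : MvPolynomial (Fin r) K, D.IsHomogeneous 1 → contract D f = 0 → D = 0) →
      ∀ A ∈ Mf f, ∀ B ∈ Mf f, A * B = B * A) := by
  have hmem : ∀ A : Matrix (Fin r) (Fin r) K,
      A ∈ Mf f ↔ ∀ i j, pd i (Lop A j f) = pd j (Lop A i f) := by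
    intro A
    rw [mem_Mf_iff]
    constructor
    · intro h i j
      rw [pd_Lop, pd_Lop]
      exact h i j
    · intro h i j
      have := h i j
      rwa [pd_Lop, pd_Lop] at this
  have key2 : ∀ A ∈ Mf f, ∀ B ∈ Mf f, ∀ i, contract (rowOp (A * B - B * A) i) f = 0 := by
    intro A hA B hB i
    have hA' := (hmem A).mp hA
    have hB' := (hmem B).mp hB
    have hrow : contract (rowOp (A * B - B * A) i) f
        = Lop (A * B) i f - Lop (B * A) i f := by
      rw [contract_rowOp, Lop, Lop, ← Finset.sum_sub_distrib]
      apply Finset.sum_congr rfl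
      intro k _
      rw [Matrix.sub_apply, sub_smul]
    rw [hrow]
    apply eq_zero_of_pd_eq_zero (n := d - 1) (by omega)
    · exact (Lop_isHomogeneous _ i hf).sub (Lop_isHomogeneous _ i hf)
    · intro m
      rw [pd_sub, pd_Lop_mul A B hB', pd_Lop_mul B A hA', Lop_Lop_comm B A i m,
        S_symm hd hf A B hA' hB' m i, sub_self]
  refine ⟨?_, key2, ?_⟩
  · intro A hA B hB
    rw [hmem]
    intro i j
    rw [pd_Lop_mul A B ((hmem B).mp hB) i j, pd_Lop_mul A B ((hmem B).mp hB) j i]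
    exact S_symm hd hf A B ((hmem A).mp hA) ((hmem B).mp hB) j i
  · intro H A hA B hB
    have h0 : ∀ i, contract (rowOp (A * B - B * A) i) f = 0 := key2 A hA B hB
    have hhom : ∀ i, (rowOp (A * B - B * A) i).IsHomogeneous 1 := by
      intro i
      rw [rowOp, ← mem_homogeneousSubmodule]
      apply Submodule.sum_mem
      intro k _
      exact Submodule.smul_mem _ _
        ((mem_homogeneousSubmodule 1 (X k)).mpr (isHomogeneous_X K k))
    have hzero : ∀ i, rowOp (A * B - B * A) i = 0 := fun i => H _ (hhom i) (h0 i)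
    have hmat : A * B - B * A = 0 := by
      ext i k
      rw [Matrix.zero_apply]
      have h1 := hzero i
      rw [rowOp_eq] at h1
      have h2 := congrArg (coeff (Finsupp.single k 1)) h1
      rw [MvPolynomial.coeff_sum, coeff_zero] at h2
      rw [← h2]
      rw [Finset.sum_eq_single k]
      · rw [coeff_monomial, if_pos rfl]
      · intro l _ hl
        rw [coeff_monomial, if_neg]
        rw [Finsupp.single_left_inj (one_ne_zero)]
        exact hl
      · intro hk
        exact absurd (Finset.mem_univ k) hk
    exact sub_eq_zero.mp hmat


end Kleppe
end

section
/- Let d ≥ 2 and f ∈ ℛ_d. Then every regular splitting of f takes place inside the K-subalgebra of ℛ generated by the space of (d−1)-st order partials of f: if f = g_1 + … + g_n is a regular splitting, then each additive component g_i lies in the K-subalgebra K[R_{d−1}(f)] ⊆ ℛ generated by the linear forms in R_{d−1}(f) ⊆ ℛ_1 (equivalently, R_{d−1}(g_i) ⊆ R_{d−1}(f) for every i). -/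
open MvPolynomial

namespace Kleppe

noncomputable section
open scoped Classical

namespace Aux

variable {K : Type*} [CommSemiring K] {r : ℕ}

theorem derivMulti_monomial (β α : Fin r →₀ ℕ) (c : K) :
    derivMulti β (MvPolynomial.monomial α c) =
      MvPolynomial.monomial (α - β) ((∏ i : Fin r, (α i).descFactorial (β i)) • c) := by
  rcases eq_or_ne c 0 with rfl | hc
  · simp [derivMulti, MvPolynomial.support_monomial]
  · rw [derivMulti, MvPolynomial.support_monomial, if_neg hc, Finset.sum_singleton,
      MvPolynomial.coeff_monomial, if_pos rfl]
    split_ifs with h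
    · rfl
    · obtain ⟨i, hi⟩ : ∃ i, α i < β i := by
        by_contra hno
        push_neg at hno
        exact h fun i => hno i
      rw [Finset.prod_eq_zero (Finset.mem_univ i)
        (Nat.descFactorial_eq_zero_iff_lt.mpr hi), zero_smul, map_zero]

theorem derivMulti_eq_sum (β : Fin r →₀ ℕ) (f : MvPolynomial (Fin r) K)
    {T : Finset (Fin r →₀ ℕ)} (hT : f.support ⊆ T) :
    derivMulti β f = ∑ α ∈ T, MvPolynomial.monomial (α - β)
      ((∏ i : Fin r, (α i).descFactorial (β i)) • MvPolynomial.coeff α f) := by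
  have hsupp : derivMulti β f = ∑ α ∈ f.support, MvPolynomial.monomial (α - β)
      ((∏ i : Fin r, (α i).descFactorial (β i)) • MvPolynomial.coeff α f) := by
    rw [derivMulti]
    refine Finset.sum_congr rfl fun α _ => ?_
    split_ifs with h
    · rfl
    · obtain ⟨i, hi⟩ : ∃ i, α i < β i := by
        by_contra hno
        push_neg at hno
        exact h fun i => hno i
      rw [Finset.prod_eq_zero (Finset.mem_univ i)
        (Nat.descFactorial_eq_zero_iff_lt.mpr hi), zero_smul, map_zero]
  rw [hsupp, Finset.sum_subset hT]
  intro α _ hα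
  rw [MvPolynomial.notMem_support_iff.mp hα, smul_zero, map_zero]

theorem derivMulti_add (β : Fin r →₀ ℕ) (p q : MvPolynomial (Fin r) K) :
    derivMulti β (p + q) = derivMulti β p + derivMulti β q := by
  classical
  set T := p.support ∪ q.support ∪ (p + q).support with hT
  have h1 : (p + q).support ⊆ T := by intro x hx; exact Finset.mem_union_right _ hx
  have h2 : p.support ⊆ T := by
    intro x hx; exact Finset.mem_union_left _ (Finset.mem_union_left _ hx)
  have h3 : q.support ⊆ T := by
    intro x hx; exact Finset.mem_union_left _ (Finset.mem_union_right _ hx)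
  rw [derivMulti_eq_sum β (p + q) h1, derivMulti_eq_sum β p h2, derivMulti_eq_sum β q h3,
    ← Finset.sum_add_distrib]
  refine Finset.sum_congr rfl fun α _ => ?_
  rw [MvPolynomial.coeff_add, smul_add, map_add]

theorem derivMulti_smul (β : Fin r →₀ ℕ) (c : K) (p : MvPolynomial (Fin r) K) :
    derivMulti β (c • p) = c • derivMulti β p := by
  classical
  set T := p.support ∪ (c • p).support with hT
  rw [derivMulti_eq_sum β (c • p) (Finset.subset_union_right),
    derivMulti_eq_sum β p (Finset.subset_union_left), Finset.smul_sum]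
  refine Finset.sum_congr rfl fun α _ => ?_
  rw [MvPolynomial.coeff_smul, smul_comm _ c, ← MvPolynomial.smul_monomial]

/-- `derivMulti β` as a linear map. -/
def dML (β : Fin r →₀ ℕ) : MvPolynomial (Fin r) K →ₗ[K] MvPolynomial (Fin r) K where
  toFun := derivMulti β
  map_add' := derivMulti_add β
  map_smul' := derivMulti_smul β

@[simp] theorem dML_apply (β : Fin r →₀ ℕ) (p : MvPolynomial (Fin r) K) :
    dML β p = derivMulti β p := rfl

theorem coeff_derivMulti (β γ : Fin r →₀ ℕ) (p : MvPolynomial (Fin r) K) :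
    MvPolynomial.coeff γ (derivMulti β p) =
      (∏ i : Fin r, ((γ + β) i).descFactorial (β i)) • MvPolynomial.coeff (γ + β) p := by
  induction p using MvPolynomial.induction_on' with
  | add p q hp hq => rw [derivMulti_add, MvPolynomial.coeff_add, hp, hq,
      MvPolynomial.coeff_add, smul_add]
  | monomial α c =>
    rw [derivMulti_monomial, MvPolynomial.coeff_monomial, MvPolynomial.coeff_monomial]
    by_cases hα : α = γ + β
    · subst hα
      rw [if_pos (add_tsub_cancel_right γ β), if_pos rfl]
    · rw [if_neg hα, smul_zero]
      split_ifs with h2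
      · obtain ⟨i, hi⟩ : ∃ i, α i < β i := by
          by_contra hno
          push_neg at hno
          have hle : β ≤ α := fun i => hno i
          exact hα (by rw [← h2, tsub_add_cancel_of_le hle])
        rw [Finset.prod_eq_zero (Finset.mem_univ i)
          (Nat.descFactorial_eq_zero_iff_lt.mpr hi), zero_smul]
      · rfl


/-- total degree of an exponent vector, as a sum over all of `Fin r`. -/
def wt (β : Fin r →₀ ℕ) : ℕ := ∑ i, β i

theorem wt_add (β γ : Fin r →₀ ℕ) : wt (β + γ) = wt β + wt γ := by
  simp [wt, Finsupp.add_apply, Finset.sum_add_distrib]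

theorem wt_single (i : Fin r) : wt (Finsupp.single i (1 : ℕ)) = 1 := by
  simp [wt, Finsupp.single_apply]

theorem degree_eq_wt (β : Fin r →₀ ℕ) : β.degree = wt β := by
  rw [show β.degree = ∑ i ∈ β.support, β i from rfl, wt, Finset.sum_subset (Finset.subset_univ _)]
  intro i _ hi
  exact Finsupp.notMem_support_iff.mp hi

theorem weight_one_eq (β : Fin r →₀ ℕ) : (Finsupp.weight 1) β = wt β := by
  rw [show (Finsupp.weight 1 : (Fin r →₀ ℕ) →+ ℕ) = Finsupp.weight (fun _ => 1) from rfl,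
    ← Finsupp.degree_eq_weight_one, degree_eq_wt]

theorem isHomog_iff {p : MvPolynomial (Fin r) K} {n : ℕ} :
    p.IsHomogeneous n ↔ ∀ α, MvPolynomial.coeff α p ≠ 0 → wt α = n := by
  unfold MvPolynomial.IsHomogeneous MvPolynomial.IsWeightedHomogeneous
  constructor
  · intro h α hα
    rw [← weight_one_eq]
    exact h hα
  · intro h α hα
    rw [weight_one_eq]
    exact h α hα

theorem prod_desc_single (β : Fin r →₀ ℕ) (i : Fin r) :
    (∏ j : Fin r, ((β + Finsupp.single i 1 : Fin r →₀ ℕ) j).descFactorial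
      ((Finsupp.single i (1 : ℕ)) j)) = β i + 1 := by
  rw [Finset.prod_eq_single i]
  · rw [Finsupp.add_apply, Finsupp.single_eq_same, Nat.descFactorial_one]
  · intro j _ hj
    rw [Finsupp.single_eq_of_ne' (Ne.symm hj), Nat.descFactorial_zero]
  · intro h
    exact absurd (Finset.mem_univ i) h

theorem pderiv_eq (i : Fin r) (p : MvPolynomial (Fin r) K) :
    MvPolynomial.pderiv i p = derivMulti (Finsupp.single i 1) p := by
  induction p using MvPolynomial.induction_on' with
  | add p q hp hq => rw [map_add, derivMulti_add, hp, hq]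
  | monomial α c =>
    rw [MvPolynomial.pderiv_monomial, derivMulti_monomial]
    congr 1
    have hprod : (∏ j : Fin r, (α j).descFactorial ((Finsupp.single i (1 : ℕ)) j)) = α i := by
      rw [Finset.prod_eq_single i]
      · rw [Finsupp.single_eq_same, Nat.descFactorial_one]
      · intro j _ hj
        rw [Finsupp.single_eq_of_ne' (Ne.symm hj), Nat.descFactorial_zero]
      · intro h
        exact absurd (Finset.mem_univ i) h
    rw [hprod, nsmul_eq_mul, mul_comm]

theorem coeff_pderiv (i : Fin r) (β : Fin r →₀ ℕ) (p : MvPolynomial (Fin r) K) :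
    MvPolynomial.coeff β (MvPolynomial.pderiv i p) =
      (β i + 1) • MvPolynomial.coeff (β + Finsupp.single i 1) p := by
  rw [pderiv_eq, coeff_derivMulti, prod_desc_single]

theorem derivMulti_pderiv (β : Fin r →₀ ℕ) (i : Fin r) (p : MvPolynomial (Fin r) K) :
    derivMulti β (MvPolynomial.pderiv i p) = derivMulti (β + Finsupp.single i 1) p := by
  apply MvPolynomial.ext
  intro γ
  rw [coeff_derivMulti, coeff_pderiv, coeff_derivMulti, ← add_assoc, smul_smul]
  congr 1
  have key : ∀ j : Fin r, ((γ + β + Finsupp.single i 1 : Fin r →₀ ℕ) j).descFactorial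
      ((β + Finsupp.single i 1 : Fin r →₀ ℕ) j)
      = ((γ + β : Fin r →₀ ℕ) j).descFactorial (β j) *
        (if j = i then (γ + β : Fin r →₀ ℕ) i + 1 else 1) := by
    intro j
    rcases eq_or_ne j i with rfl | hj
    · simp only [Finsupp.add_apply, Finsupp.single_eq_same, if_pos rfl]
      rw [Nat.succ_descFactorial_succ, mul_comm]
      simp
    · simp [Finsupp.add_apply, Finsupp.single_eq_of_ne (Ne.symm hj), hj]
  rw [Finset.prod_congr rfl (fun j _ => key j), Finset.prod_mul_distrib,
    Finset.prod_ite_eq' Finset.univ i (fun _ => (γ + β : Fin r →₀ ℕ) i + 1),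
    if_pos (Finset.mem_univ i)]

theorem exists_single_of_wt_one {γ : Fin r →₀ ℕ} (h : wt γ = 1) :
    ∃ i, γ = Finsupp.single i 1 := by
  obtain ⟨i, hi⟩ : ∃ i, γ i ≠ 0 := by
    by_contra hno
    push_neg at hno
    rw [wt] at h
    simp [hno] at h
  refine ⟨i, ?_⟩
  have hsplit : γ i + ∑ j ∈ Finset.univ.erase i, γ j = 1 := by
    rw [Finset.add_sum_erase _ _ (Finset.mem_univ i)]
    exact h
  have hγi : γ i = 1 := by omega
  have h0 : ∑ j ∈ Finset.univ.erase i, γ j = 0 := by omega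
  ext j
  rcases eq_or_ne j i with rfl | hj
  · rw [Finsupp.single_eq_same]; exact hγi
  · rw [Finsupp.single_eq_of_ne' (Ne.symm hj)]
    exact (Finset.sum_eq_zero_iff.mp h0) j (Finset.mem_erase.mpr ⟨hj, Finset.mem_univ j⟩)

theorem derivMulti_isHomog {p : MvPolynomial (Fin r) K} {n k : ℕ} (hp : p.IsHomogeneous n)
    (β : Fin r →₀ ℕ) (hβ : wt β + k = n) : (derivMulti β p).IsHomogeneous k := by
  rw [isHomog_iff] at hp ⊢
  intro γ hγ
  rw [coeff_derivMulti] at hγ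
  have hc : MvPolynomial.coeff (γ + β) p ≠ 0 := by
    intro h
    rw [h, smul_zero] at hγ
    exact hγ rfl
  have := hp _ hc
  rw [wt_add] at this
  omega

theorem homog_one_eq {p : MvPolynomial (Fin r) K} (hp : p.IsHomogeneous 1) :
    p = ∑ i : Fin r, MvPolynomial.coeff (Finsupp.single i 1) p • MvPolynomial.X i := by
  apply MvPolynomial.ext
  intro γ
  rw [MvPolynomial.coeff_sum]
  by_cases hγ : wt γ = 1
  · obtain ⟨i0, rfl⟩ := exists_single_of_wt_one hγ
    rw [Finset.sum_eq_single i0]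
    · rw [MvPolynomial.coeff_smul, MvPolynomial.coeff_X, smul_eq_mul, if_pos rfl, mul_one]
    · intro j _ hj
      rw [MvPolynomial.coeff_smul, MvPolynomial.coeff_X', if_neg, smul_zero]
      intro hEq
      exact hj (by
        have := Finsupp.single_left_injective (one_ne_zero (α := ℕ)) hEq
        exact this)
    · intro h
      exact absurd (Finset.mem_univ i0) h
  · have hL : MvPolynomial.coeff γ p = 0 := by
      by_contra hc
      exact hγ (isHomog_iff.mp hp γ hc)
    rw [hL]
    symm
    apply Finset.sum_eq_zero
    intro i _
    rw [MvPolynomial.coeff_smul, MvPolynomial.coeff_X', if_neg, smul_zero]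
    intro hEq
    exact hγ (by rw [← hEq, wt_single])

theorem contract_eq_sum (D f : MvPolynomial (Fin r) K) {T : Finset (Fin r →₀ ℕ)}
    (hT : D.support ⊆ T) :
    contract D f = ∑ β ∈ T, MvPolynomial.coeff β D • derivMulti β f := by
  rw [contract, Finset.sum_subset hT]
  intro β _ hβ
  rw [MvPolynomial.notMem_support_iff.mp hβ, zero_smul]

theorem contract_monomial (β : Fin r →₀ ℕ) (c : K) (f : MvPolynomial (Fin r) K) :
    contract (MvPolynomial.monomial β c) f = c • derivMulti β f := by
  rcases eq_or_ne c 0 with rfl | hc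
  · simp [contract, MvPolynomial.support_monomial]
  · rw [contract, MvPolynomial.support_monomial, if_neg hc, Finset.sum_singleton,
      MvPolynomial.coeff_monomial, if_pos rfl]

theorem contract_add_left (D E f : MvPolynomial (Fin r) K) :
    contract (D + E) f = contract D f + contract E f := by
  classical
  set T := D.support ∪ E.support ∪ (D + E).support with hT
  have h1 : (D + E).support ⊆ T := fun x hx => Finset.mem_union_right _ hx
  have h2 : D.support ⊆ T := fun x hx =>
    Finset.mem_union_left _ (Finset.mem_union_left _ hx)
  have h3 : E.support ⊆ T := fun x hx =>
    Finset.mem_union_left _ (Finset.mem_union_right _ hx)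
  rw [contract_eq_sum (D + E) f h1, contract_eq_sum D f h2, contract_eq_sum E f h3,
    ← Finset.sum_add_distrib]
  refine Finset.sum_congr rfl fun β _ => ?_
  rw [MvPolynomial.coeff_add, add_smul]

theorem contract_smul_left (c : K) (D f : MvPolynomial (Fin r) K) :
    contract (c • D) f = c • contract D f := by
  classical
  set T := D.support ∪ (c • D).support with hT
  rw [contract_eq_sum (c • D) f (Finset.subset_union_right),
    contract_eq_sum D f (Finset.subset_union_left), Finset.smul_sum]
  refine Finset.sum_congr rfl fun β _ => ?_
  rw [MvPolynomial.coeff_smul, smul_smul, smul_eq_mul]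

/-- `D ↦ contract D f` as a linear map. -/
def ctL (f : MvPolynomial (Fin r) K) : MvPolynomial (Fin r) K →ₗ[K] MvPolynomial (Fin r) K where
  toFun D := contract D f
  map_add' D E := contract_add_left D E f
  map_smul' c D := contract_smul_left c D f

@[simp] theorem ctL_apply (f D : MvPolynomial (Fin r) K) : ctL f D = contract D f := rfl


section FieldLemmas

variable {K : Type*} [Field K] [CharZero K] {r : ℕ}

/-- coefficient vector ↦ linear form -/
def eps : (Fin r → K) →ₗ[K] MvPolynomial (Fin r) K where
  toFun a := ∑ i, a i • MvPolynomial.X i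
  map_add' a b := by simp [add_smul, Finset.sum_add_distrib]
  map_smul' c a := by simp [Finset.smul_sum, mul_smul]

@[simp] theorem eps_apply (a : Fin r → K) : eps a = ∑ i, a i • MvPolynomial.X i := rfl

/-- directional derivative linear map of `h` -/
def Tm (h : MvPolynomial (Fin r) K) : (Fin r → K) →ₗ[K] MvPolynomial (Fin r) K where
  toFun a := ∑ i, a i • MvPolynomial.pderiv i h
  map_add' a b := by simp [add_smul, Finset.sum_add_distrib]
  map_smul' c a := by simp [Finset.smul_sum, mul_smul]

@[simp] theorem Tm_apply (h : MvPolynomial (Fin r) K) (a : Fin r → K) :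
    Tm h a = ∑ i, a i • MvPolynomial.pderiv i h := rfl

/-- the standard dot product on `K^r` -/
def dotB : LinearMap.BilinForm K (Fin r → K) :=
  LinearMap.mk₂ K (fun v w => ∑ i, v i * w i)
    (fun m₁ m₂ n => by simp [add_mul, Finset.sum_add_distrib])
    (fun c m n => by simp [Finset.mul_sum, mul_assoc])
    (fun m n₁ n₂ => by simp [mul_add, Finset.sum_add_distrib])
    (fun c m n => by simp [Finset.mul_sum, mul_left_comm])

@[simp] theorem dotB_apply (v w : Fin r → K) : dotB v w = ∑ i, v i * w i := rfl

theorem dotB_refl : (dotB (K := K) (r := r)).IsRefl := by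
  intro v w h
  rw [dotB_apply] at h ⊢
  rw [← h]
  exact Finset.sum_congr rfl fun i _ => mul_comm _ _

theorem dotB_nondeg : (dotB (K := K) (r := r)).Nondegenerate := by
  refine (LinearMap.IsRefl.nondegenerate_iff_separatingLeft
    (show LinearMap.IsRefl (dotB (K := K) (r := r)) from dotB_refl)).mpr ?_
  intro v hv
  funext i
  have := hv (Pi.single i 1)
  rw [dotB_apply] at this
  simpa [Pi.single_apply, mul_ite, Finset.sum_ite_eq'] using this

/-- coefficient rows of the first-order catalecticant of `h` -/
def rho (h : MvPolynomial (Fin r) K) (β : Fin r →₀ ℕ) : Fin r → K :=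
  fun i => (β i + 1) • MvPolynomial.coeff (β + Finsupp.single i 1) h

/-- row space -/
def RowSp (h : MvPolynomial (Fin r) K) : Submodule K (Fin r → K) :=
  Submodule.span K (Set.range (rho h))

theorem coeff_Tm (h : MvPolynomial (Fin r) K) (a : Fin r → K) (β : Fin r →₀ ℕ) :
    MvPolynomial.coeff β (Tm h a) = dotB (rho h β) a := by
  rw [Tm_apply, MvPolynomial.coeff_sum, dotB_apply]
  refine Finset.sum_congr rfl fun i _ => ?_
  rw [MvPolynomial.coeff_smul, coeff_pderiv, rho, smul_eq_mul, mul_comm]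

theorem mem_orth_span {S : Set (Fin r → K)} {a : Fin r → K} :
    a ∈ dotB.orthogonal (Submodule.span K S) ↔ ∀ s ∈ S, dotB s a = 0 := by
  rw [LinearMap.BilinForm.mem_orthogonal_iff]
  constructor
  · intro h s hs
    exact h s (Submodule.subset_span hs)
  · intro h n hn
    have hle : Submodule.span K S ≤ LinearMap.ker (dotB.flip a) := by
      rw [Submodule.span_le]
      intro s hs
      rw [SetLike.mem_coe, LinearMap.mem_ker]
      exact h s hs
    exact hle hn

theorem ker_Tm_eq (h : MvPolynomial (Fin r) K) :
    LinearMap.ker (Tm h) = dotB.orthogonal (RowSp h) := by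
  ext a
  rw [LinearMap.mem_ker, RowSp, mem_orth_span]
  constructor
  · rintro hT _ ⟨β, rfl⟩
    rw [← coeff_Tm, hT, MvPolynomial.coeff_zero]
  · intro hall
    apply MvPolynomial.ext
    intro β
    rw [coeff_Tm, MvPolynomial.coeff_zero]
    exact hall _ ⟨β, rfl⟩

theorem orth_ker_le (h : MvPolynomial (Fin r) K) :
    dotB.orthogonal (LinearMap.ker (Tm h)) ≤ RowSp h := by
  rw [ker_Tm_eq]
  exact le_of_eq (LinearMap.BilinForm.orthogonal_orthogonal dotB_nondeg dotB_refl _)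

theorem desc_succ_self (m : ℕ) : (m + 1).descFactorial m = (m + 1).factorial := by
  induction m with
  | zero => rfl
  | succ m ih => rw [Nat.succ_descFactorial_succ, ih, ← Nat.factorial_succ]

theorem prod_desc_fac (β : Fin r →₀ ℕ) (i : Fin r) :
    (∏ j : Fin r, ((Finsupp.single i 1 + β : Fin r →₀ ℕ) j).descFactorial (β j))
      = (β i + 1) * ∏ j : Fin r, (β j).factorial := by
  have key : ∀ j : Fin r, ((Finsupp.single i 1 + β : Fin r →₀ ℕ) j).descFactorial (β j)
      = (β j).factorial * (if j = i then β i + 1 else 1) := by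
    intro j
    rcases eq_or_ne j i with rfl | hj
    · simp only [Finsupp.add_apply, Finsupp.single_eq_same, if_pos rfl]
      rw [add_comm 1 (β j), desc_succ_self, Nat.factorial_succ, mul_comm]
      simp
    · simp [Finsupp.add_apply, Finsupp.single_eq_of_ne (Ne.symm hj), hj,
        Nat.descFactorial_self]
  rw [Finset.prod_congr rfl (fun j _ => key j), Finset.prod_mul_distrib,
    Finset.prod_ite_eq' Finset.univ i (fun _ => β i + 1), if_pos (Finset.mem_univ i),
    mul_comm]

theorem derivMulti_eq_eps {h : MvPolynomial (Fin r) K} {e : ℕ} (hh : h.IsHomogeneous (e + 1))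
    {β : Fin r →₀ ℕ} (hβ : wt β = e) :
    derivMulti β h = ((∏ j, (β j).factorial : ℕ) : K) • eps (rho h β) := by
  have h1 : (derivMulti β h).IsHomogeneous 1 := derivMulti_isHomog hh β (by omega)
  rw [homog_one_eq h1, eps_apply, Finset.smul_sum]
  refine Finset.sum_congr rfl fun i _ => ?_
  rw [coeff_derivMulti, prod_desc_fac, rho, add_comm (Finsupp.single i 1) β, smul_smul]
  congr 1
  rw [nsmul_eq_mul, nsmul_eq_mul]
  push_cast
  ring

theorem map_eps_RowSp {h : MvPolynomial (Fin r) K} {e : ℕ} (hh : h.IsHomogeneous (e + 1)) :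
    Submodule.map eps (RowSp h) = partials e h := by
  rw [RowSp, Submodule.map_span, partials]
  apply le_antisymm
  · rw [Submodule.span_le]
    rintro _ ⟨_, ⟨β, rfl⟩, rfl⟩
    by_cases hβ : wt β = e
    · have hkey := derivMulti_eq_eps hh hβ
      have hBne : ((∏ j, (β j).factorial : ℕ) : K) ≠ 0 := by
        rw [Nat.cast_ne_zero]
        exact Finset.prod_ne_zero_iff.mpr fun j _ => Nat.factorial_ne_zero _
      have heq : eps (rho h β) = (((∏ j, (β j).factorial : ℕ) : K))⁻¹ • derivMulti β h := by
        rw [hkey, smul_smul, inv_mul_cancel₀ hBne, one_smul]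
      rw [heq]
      refine Submodule.smul_mem _ _ (Submodule.subset_span ?_)
      refine ⟨MvPolynomial.monomial β 1, ?_, by rw [contract_monomial, one_smul]⟩
      exact MvPolynomial.isHomogeneous_monomial _ (by rw [degree_eq_wt]; exact hβ)
    · have hz : rho h β = 0 := by
        funext i
        have hc0 : MvPolynomial.coeff (β + Finsupp.single i 1) h = 0 := by
          by_contra hc
          have := isHomog_iff.mp hh _ hc
          rw [wt_add, wt_single] at this
          omega
        rw [rho, hc0, smul_zero]
        rfl
      rw [hz, map_zero]
      exact Submodule.zero_mem _
  · rw [Submodule.span_le]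
    rintro _ ⟨D, hD, rfl⟩
    rw [SetLike.mem_coe, contract]
    refine Submodule.sum_mem _ fun β hβ => ?_
    refine Submodule.smul_mem _ _ ?_
    have hwt : wt β = e := isHomog_iff.mp hD β (MvPolynomial.mem_support_iff.mp hβ)
    rw [derivMulti_eq_eps hh hwt]
    exact Submodule.smul_mem _ _ (Submodule.subset_span ⟨rho h β, ⟨β, rfl⟩, rfl⟩)


theorem pderiv_aeval (L : Fin r → MvPolynomial (Fin r) K) (k : Fin r)
    (p : MvPolynomial (Fin r) K) :
    MvPolynomial.pderiv k (MvPolynomial.aeval L p)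
      = ∑ i, MvPolynomial.aeval L (MvPolynomial.pderiv i p) * MvPolynomial.pderiv k (L i) := by
  induction p using MvPolynomial.induction_on with
  | C a => simp
  | add p q hp hq =>
    rw [map_add, map_add, hp, hq, ← Finset.sum_add_distrib]
    refine Finset.sum_congr rfl fun i _ => ?_
    rw [map_add, map_add, add_mul]
  | mul_X p j hp =>
    rw [map_mul, MvPolynomial.aeval_X, MvPolynomial.pderiv_mul, hp]
    have hterm : ∀ i : Fin r,
        MvPolynomial.aeval L (MvPolynomial.pderiv i (p * MvPolynomial.X j))
          * MvPolynomial.pderiv k (L i)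
        = (MvPolynomial.aeval L (MvPolynomial.pderiv i p) * MvPolynomial.pderiv k (L i)) * L j
          + (if i = j then MvPolynomial.aeval L p * MvPolynomial.pderiv k (L i) else 0) := by
      intro i
      rw [MvPolynomial.pderiv_mul, map_add, map_mul, map_mul, MvPolynomial.aeval_X]
      rcases eq_or_ne i j with rfl | hij
      · rw [MvPolynomial.pderiv_X_self, map_one, mul_one, if_pos rfl]
        ring
      · rw [MvPolynomial.pderiv_X_of_ne (Ne.symm hij), map_zero, mul_zero, add_zero,
          if_neg hij]
        ring
    rw [Finset.sum_congr rfl (fun i _ => hterm i), Finset.sum_add_distrib,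
      Finset.sum_ite_eq' Finset.univ j
        (fun i => MvPolynomial.aeval L p * MvPolynomial.pderiv k (L i)),
      if_pos (Finset.mem_univ j), ← Finset.sum_mul]

theorem mem_adjoin_of_deriv_vanish (N : Submodule K (Fin r → K)) (p : MvPolynomial (Fin r) K)
    (hp : ∀ a ∈ N, Tm p a = 0) :
    p ∈ Algebra.adjoin K (eps '' ((dotB.orthogonal N : Submodule K (Fin r → K)) :
      Set (Fin r → K))) := by
  classical
  obtain ⟨N', hcompl⟩ := Submodule.exists_isCompl N
  let b1 := Module.finBasis K N
  let b2 := Module.finBasis K N'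
  let bb := (b1.prod b2).map (Submodule.prodEquivOfIsCompl N N' hcompl)
  have hcard : Fintype.card (Fin (Module.finrank K N) ⊕ Fin (Module.finrank K N')) = r := by
    rw [Fintype.card_sum, Fintype.card_fin, Fintype.card_fin,
      Submodule.finrank_add_eq_of_isCompl hcompl, Module.finrank_pi, Fintype.card_fin]
  let eqv := Fintype.equivFinOfCardEq hcard
  let w : Module.Basis (Fin r) K (Fin r → K) := bb.reindex eqv
  let s : Set (Fin r) := Set.range (fun j => eqv (Sum.inl j))
  have hwinl : ∀ j, w (eqv (Sum.inl j)) = (b1 j : Fin r → K) := by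
    intro j
    show (bb.reindex eqv) (eqv (Sum.inl j)) = _
    rw [Module.Basis.reindex_apply, Equiv.symm_apply_apply]
    show ((b1.prod b2).map (Submodule.prodEquivOfIsCompl N N' hcompl)) (Sum.inl j) = _
    rw [Module.Basis.map_apply]
    have hprodj : (b1.prod b2) (Sum.inl j) = (b1 j, (0 : N')) := by
      apply Prod.ext
      · rw [Module.Basis.prod_apply_inl_fst]
      · rw [Module.Basis.prod_apply_inl_snd]
    rw [hprodj, Submodule.coe_prodEquivOfIsCompl']
    simp
  have hws : ∀ k ∈ s, (w k : Fin r → K) ∈ N := by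
    rintro k ⟨j, rfl⟩
    rw [hwinl j]
    exact (b1 j).2
  have hNs : N ≤ Submodule.span K (w '' s) := by
    intro x hx
    have hrepr := Module.Basis.sum_repr b1 ⟨x, hx⟩
    have hxeq : x = ∑ j, b1.repr ⟨x, hx⟩ j • (b1 j : Fin r → K) := by
      conv_lhs => rw [show x = ((⟨x, hx⟩ : N) : Fin r → K) from rfl, ← hrepr]
      simp only [Submodule.coe_sum, Submodule.coe_smul]
    rw [hxeq]
    refine Submodule.sum_mem _ fun j _ => Submodule.smul_mem _ _ (Submodule.subset_span ?_)
    exact ⟨eqv (Sum.inl j), ⟨j, rfl⟩, hwinl j⟩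
  -- dual vectors
  let u : Fin r → (Fin r → K) := fun k i => w.coord k (Pi.single i 1)
  have hsingle : ∀ (v : Fin r → K), (∑ i, v i • (Pi.single i 1 : Fin r → K)) = v := by
    intro v
    have hrw : ∀ i : Fin r, (fun j => if i = j then (1 : K) else 0) = (Pi.single i 1 : Fin r → K) := by
      intro i
      funext j
      rw [Pi.single_apply]
      by_cases h : i = j
      · rw [if_pos h, if_pos h.symm]
      · rw [if_neg h, if_neg (Ne.symm h)]
    calc (∑ i, v i • (Pi.single i 1 : Fin r → K))
        = ∑ i, v i • (fun j => if i = j then (1 : K) else 0) :=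
          Finset.sum_congr rfl fun i _ => by rw [hrw i]
      _ = v := (pi_eq_sum_univ v).symm
  have hu : ∀ k l, (∑ i, u k i * w l i) = if k = l then 1 else 0 := by
    intro k l
    have hterm : ∀ i, u k i * w l i = w.coord k ((w l i) • (Pi.single i 1 : Fin r → K)) := by
      intro i
      rw [map_smul, smul_eq_mul]
      exact mul_comm _ _
    rw [Finset.sum_congr rfl fun i _ => hterm i, ← map_sum, hsingle (w l)]
    rw [Module.Basis.coord_apply, Module.Basis.repr_self, Finsupp.single_apply]
    by_cases h : k = l
    · rw [if_pos h, if_pos h.symm]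
    · rw [if_neg h, if_neg (Ne.symm h)]
  -- matrix identity
  have hBA : (Matrix.of u * (Matrix.of (fun k i => w k i)).transpose
      : Matrix (Fin r) (Fin r) K) = 1 := by
    ext k l
    rw [Matrix.mul_apply]
    simp only [Matrix.of_apply, Matrix.transpose_apply]
    rw [hu k l, Matrix.one_apply]
  have hAB := mul_eq_one_comm.mp hBA
  have hABentry : ∀ i j, (∑ k, w k i * u k j) = if i = j then (1 : K) else 0 := by
    intro i j
    have hentry := congrFun (congrFun hAB i) j
    rw [Matrix.mul_apply] at hentry
    simp only [Matrix.of_apply, Matrix.transpose_apply, Matrix.one_apply] at hentry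
    exact hentry
  -- substitutions
  let L : Fin r → MvPolynomial (Fin r) K := fun i => ∑ k, w k i • MvPolynomial.X k
  let Y : Fin r → MvPolynomial (Fin r) K := fun k => ∑ i, u k i • MvPolynomial.X i
  let q := MvPolynomial.aeval (R := K) L p
  have hpdL : ∀ k i, MvPolynomial.pderiv k (L i) = MvPolynomial.C (w k i) := by
    intro k i
    show MvPolynomial.pderiv k (∑ k', w k' i • MvPolynomial.X k') = _
    rw [map_sum, Finset.sum_eq_single k]
    · rw [(MvPolynomial.pderiv k).map_smul, MvPolynomial.pderiv_X_self, smul_eq_C_mul, mul_one]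
    · intro k' _ hk'
      rw [(MvPolynomial.pderiv k).map_smul, MvPolynomial.pderiv_X_of_ne hk', smul_zero]
    · intro h
      exact absurd (Finset.mem_univ k) h
  have hq0 : ∀ k ∈ s, MvPolynomial.pderiv k q = 0 := by
    intro k hk
    show MvPolynomial.pderiv k (MvPolynomial.aeval (R := K) L p) = 0
    rw [pderiv_aeval]
    have hterm : ∀ i, MvPolynomial.aeval (R := K) L (MvPolynomial.pderiv i p)
        * MvPolynomial.pderiv k (L i)
        = MvPolynomial.aeval (R := K) L ((w k) i • MvPolynomial.pderiv i p) := by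
      intro i
      rw [hpdL, map_smul, smul_eq_C_mul, mul_comm]
    rw [Finset.sum_congr rfl fun i _ => hterm i, ← map_sum]
    have hTk := hp (w k) (hws k hk)
    rw [Tm_apply] at hTk
    rw [hTk, map_zero]
  have hvars : ∀ k ∈ s, k ∉ q.vars := by
    intro k hk hkv
    obtain ⟨α, hαsupp, hkα⟩ := (MvPolynomial.mem_vars k).mp hkv
    have hαk : α k ≠ 0 := Finsupp.mem_support_iff.mp hkα
    have h0 := hq0 k hk
    have hco := congrArg (MvPolynomial.coeff (α - Finsupp.single k 1)) h0
    rw [coeff_pderiv, MvPolynomial.coeff_zero] at hco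
    have hle : Finsupp.single k 1 ≤ α := by
      rw [Finsupp.single_le_iff]
      omega
    rw [tsub_add_cancel_of_le hle] at hco
    have happ : (α - Finsupp.single k 1 : Fin r →₀ ℕ) k + 1 = α k := by
      rw [Finsupp.tsub_apply, Finsupp.single_eq_same]
      omega
    rw [happ, nsmul_eq_mul, mul_eq_zero] at hco
    rcases hco with hco | hco
    · exact hαk (Nat.cast_eq_zero.mp hco)
    · exact (MvPolynomial.mem_support_iff.mp hαsupp) hco
  have hadj : q ∈ Algebra.adjoin K (MvPolynomial.X '' (sᶜ : Set (Fin r))) := by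
    have hsup : q ∈ MvPolynomial.supported K (sᶜ : Set (Fin r)) := by
      rw [MvPolynomial.mem_supported]
      intro k hk
      simp only [Set.mem_compl_iff]
      intro hks
      exact hvars k hks (by simpa using hk)
    exact hsup
  have hYL : ∀ i, MvPolynomial.aeval (R := K) Y (L i) = MvPolynomial.X i := by
    intro i
    show MvPolynomial.aeval (R := K) Y (∑ k, w k i • MvPolynomial.X k) = _
    rw [map_sum]
    have h1 : ∀ k, MvPolynomial.aeval (R := K) Y (w k i • MvPolynomial.X k)
        = ∑ j, (w k i * u k j) • MvPolynomial.X j := by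
      intro k
      rw [map_smul, MvPolynomial.aeval_X]
      show w k i • (∑ j, u k j • MvPolynomial.X j) = _
      rw [Finset.smul_sum]
      refine Finset.sum_congr rfl fun j _ => ?_
      rw [smul_smul]
    rw [Finset.sum_congr rfl fun k _ => h1 k, Finset.sum_comm]
    have h2 : ∀ j, (∑ k, (w k i * u k j) • MvPolynomial.X j)
        = (∑ k, w k i * u k j) • (MvPolynomial.X j : MvPolynomial (Fin r) K) := by
      intro j
      rw [Finset.sum_smul]
    rw [Finset.sum_congr rfl fun j _ => h2 j,
      Finset.sum_congr rfl fun j _ => by rw [hABentry i j]]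
    have h3 : ∀ j, (if i = j then (1 : K) else 0) • (MvPolynomial.X j : MvPolynomial (Fin r) K)
        = if j = i then MvPolynomial.X j else 0 := by
      intro j
      by_cases h : i = j
      · rw [if_pos h, if_pos h.symm, one_smul]
      · rw [if_neg h, if_neg (Ne.symm h), zero_smul]
    rw [Finset.sum_congr rfl fun j _ => h3 j,
      Finset.sum_ite_eq' Finset.univ i (fun j => (MvPolynomial.X j : MvPolynomial (Fin r) K)),
      if_pos (Finset.mem_univ i)]
  have hpq : MvPolynomial.aeval (R := K) Y q = p := by
    have hcomp : (MvPolynomial.aeval (R := K) Y).comp (MvPolynomial.aeval (R := K) L)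
        = MvPolynomial.aeval (R := K) (fun i => MvPolynomial.aeval (R := K) Y (L i)) := by
      apply MvPolynomial.algHom_ext
      intro i
      rw [AlgHom.comp_apply, MvPolynomial.aeval_X, MvPolynomial.aeval_X]
    have : MvPolynomial.aeval (R := K) Y q = MvPolynomial.aeval (R := K)
        (fun i => MvPolynomial.aeval (R := K) Y (L i)) p := by
      rw [← hcomp]
      rfl
    rw [this]
    have hfun : (fun i => MvPolynomial.aeval (R := K) Y (L i))
        = (MvPolynomial.X : Fin r → MvPolynomial (Fin r) K) := by
      funext i
      exact hYL i
    rw [hfun]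
    exact MvPolynomial.aeval_X_left_apply p
  -- conclude
  have himg : p ∈ (Algebra.adjoin K (MvPolynomial.X '' (sᶜ : Set (Fin r)))).map
      (MvPolynomial.aeval (R := K) Y) := by
    exact Subalgebra.mem_map.mpr ⟨q, hadj, hpq⟩
  rw [AlgHom.map_adjoin] at himg
  refine Algebra.adjoin_mono ?_ himg
  rintro _ ⟨_, ⟨k, hks, rfl⟩, rfl⟩
  rw [MvPolynomial.aeval_X]
  refine ⟨u k, ?_, ?_⟩
  · rw [SetLike.mem_coe, LinearMap.BilinForm.mem_orthogonal_iff]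
    intro n hn
    have hn' := hNs hn
    have hker : Submodule.span K (w '' s) ≤ LinearMap.ker (dotB.flip (u k)) := by
      rw [Submodule.span_le]
      rintro _ ⟨l, hls, rfl⟩
      rw [SetLike.mem_coe, LinearMap.mem_ker]
      show dotB (w l) (u k) = 0
      rw [dotB_apply]
      have : (∑ i, w l i * u k i) = ∑ i, u k i * w l i :=
        Finset.sum_congr rfl fun i _ => mul_comm _ _
      rw [this, hu k l, if_neg]
      intro hkl
      exact hks (hkl ▸ hls)
    have := hker hn'
    rw [LinearMap.mem_ker] at this
    exact this
  · show eps (u k) = ∑ i, u k i • MvPolynomial.X i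
    rw [eps_apply]


theorem Tm_finset_sum (S : Finset (MvPolynomial (Fin r) K)) (a : Fin r → K) :
    Tm (∑ h ∈ S, h) a = ∑ h ∈ S, Tm h a := by
  rw [Tm_apply]
  have h1 : ∀ i : Fin r, a i • MvPolynomial.pderiv i (∑ h ∈ S, h)
      = ∑ h ∈ S, a i • MvPolynomial.pderiv i h := by
    intro i
    rw [map_sum, Finset.smul_sum]
  rw [Finset.sum_congr rfl fun i _ => h1 i, Finset.sum_comm]
  exact Finset.sum_congr rfl fun h _ => (Tm_apply h a).symm

theorem ker_Tm_le {d : ℕ} (hd : 2 ≤ d) (f : MvPolynomial (Fin r) K)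
    (G : Set (MvPolynomial (Fin r) K)) (hG : IsRegSplit d f G) {g : MvPolynomial (Fin r) K}
    (hg : g ∈ G) : LinearMap.ker (Tm f) ≤ LinearMap.ker (Tm g) := by
  classical
  obtain ⟨hfin, hne, hcomp, hsum, hdisj⟩ := hG
  intro a ha
  rw [LinearMap.mem_ker] at ha ⊢
  have hsum' : ∑ h ∈ hfin.toFinset, h = f := by
    rw [← hsum]
    exact (finsum_mem_eq_finite_toFinset_sum _ hfin).symm
  have hmem : ∀ h ∈ G, ∀ β : Fin r →₀ ℕ, wt β = d - 2 →
      derivMulti β (Tm h a) ∈ partials (d - 1) h := by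
    intro h hh β hβ
    have hexp : derivMulti β (Tm h a)
        = contract (∑ i, MvPolynomial.monomial (β + Finsupp.single i 1) (a i)) h := by
      have l1 : derivMulti β (Tm h a) = ∑ i, a i • derivMulti (β + Finsupp.single i 1) h := by
        rw [Tm_apply, show (derivMulti β (∑ i, a i • MvPolynomial.pderiv i h))
            = dML β (∑ i, a i • MvPolynomial.pderiv i h) from rfl, map_sum]
        refine Finset.sum_congr rfl fun i _ => ?_
        rw [map_smul, dML_apply, derivMulti_pderiv]
      have l2 : contract (∑ i, MvPolynomial.monomial (β + Finsupp.single i 1) (a i)) h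
          = ∑ i, a i • derivMulti (β + Finsupp.single i 1) h := by
        rw [show contract (∑ i, MvPolynomial.monomial (β + Finsupp.single i 1) (a i)) h
            = ctL h (∑ i, MvPolynomial.monomial (β + Finsupp.single i 1) (a i)) from rfl,
          map_sum]
        refine Finset.sum_congr rfl fun i _ => ?_
        rw [ctL_apply, contract_monomial]
      rw [l1, ← l2]
    rw [hexp]
    apply Submodule.subset_span
    refine ⟨_, ?_, rfl⟩
    refine MvPolynomial.IsHomogeneous.sum _ _ _ fun i _ => ?_
    apply MvPolynomial.isHomogeneous_monomial
    rw [degree_eq_wt, wt_add, wt_single]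
    omega
  have hkey : ∀ β : Fin r →₀ ℕ, wt β = d - 2 → derivMulti β (Tm g a) = 0 := by
    intro β hβ
    have hzero : ∑ h ∈ hfin.toFinset, derivMulti β (Tm h a) = 0 := by
      have l1 : ∑ h ∈ hfin.toFinset, derivMulti β (Tm h a)
          = dML β (∑ h ∈ hfin.toFinset, Tm h a) := (map_sum (dML β) _ _).symm
      rw [l1, ← Tm_finset_sum, hsum', ha, dML_apply]
      apply MvPolynomial.ext
      intro γ
      rw [coeff_derivMulti, MvPolynomial.coeff_zero, MvPolynomial.coeff_zero, smul_zero]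
    have hg' : g ∈ hfin.toFinset := hfin.mem_toFinset.mpr hg
    have hsplit := Finset.add_sum_erase hfin.toFinset
      (fun h => derivMulti β (Tm h a)) hg'
    have hneg : derivMulti β (Tm g a)
        = - ∑ h ∈ hfin.toFinset.erase g, derivMulti β (Tm h a) := by
      have l2 := hsplit.trans hzero
      exact eq_neg_of_add_eq_zero_left l2
    have hxg : derivMulti β (Tm g a) ∈ ⨆ h ∈ G \ {g}, partials (d - 1) h := by
      rw [hneg]
      refine Submodule.neg_mem _ (Submodule.sum_mem _ fun h hh => ?_)
      have hhG : h ∈ G := hfin.mem_toFinset.mp (Finset.mem_of_mem_erase hh)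
      have hne' : h ≠ g := Finset.ne_of_mem_erase hh
      have hle : partials (d - 1) h ≤ ⨆ h ∈ G \ {g}, partials (d - 1) h := by
        have hmem' : h ∈ G \ {g} := ⟨hhG, hne'⟩
        exact le_iSup₂ (f := fun h _ => partials (d - 1) h) h hmem'
      exact hle (hmem h hhG β hβ)
    exact Submodule.disjoint_def.mp (hdisj g hg) _ (hmem g hg β hβ) hxg
  have hqhom : (Tm g a).IsHomogeneous (d - 1) := by
    rw [Tm_apply, ← MvPolynomial.mem_homogeneousSubmodule]
    refine Submodule.sum_mem _ fun i _ => Submodule.smul_mem _ _ ?_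
    rw [MvPolynomial.mem_homogeneousSubmodule, pderiv_eq]
    exact derivMulti_isHomog (hcomp g hg).2 _ (by rw [wt_single]; omega)
  apply MvPolynomial.ext
  intro α
  rw [MvPolynomial.coeff_zero]
  by_cases hα : wt α = d - 1
  · obtain ⟨i, hi⟩ : ∃ i, α i ≠ 0 := by
      by_contra hno
      push_neg at hno
      have : wt α = 0 := by
        rw [wt]
        exact Finset.sum_eq_zero fun i _ => hno i
      omega
    set β := α - Finsupp.single i 1 with hβdef
    have hle : Finsupp.single i 1 ≤ α := by
      rw [Finsupp.single_le_iff]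
      omega
    have hidx : Finsupp.single i 1 + β = α := by
      rw [add_comm]
      exact tsub_add_cancel_of_le hle
    have hwtβ : wt β = d - 2 := by
      have l1 : wt α = wt β + 1 := by
        rw [← hidx, wt_add, wt_single]
        omega
      omega
    have h0 := hkey β hwtβ
    have hco := congrArg (MvPolynomial.coeff (Finsupp.single i 1)) h0
    rw [coeff_derivMulti, MvPolynomial.coeff_zero, hidx] at hco
    have hprodpos : (∏ j, (α j).descFactorial (β j)) ≠ 0 := by
      rw [Finset.prod_ne_zero_iff]
      intro j _ hdz
      have hlt := Nat.descFactorial_eq_zero_iff_lt.mp hdz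
      have hβle : β j ≤ α j := by
        rw [hβdef, Finsupp.tsub_apply]
        omega
      omega
    rw [nsmul_eq_mul, mul_eq_zero] at hco
    rcases hco with h | h
    · exact absurd (Nat.cast_eq_zero.mp h) hprodpos
    · exact h
  · by_contra hc
    exact hα (isHomog_iff.mp hqhom α hc)

end FieldLemmas

end Aux

end

/-- Corollary 2.9. For `d ≥ 2`, every regular splitting of `f ∈ ℛ_d`
takes place inside the subring `K[R_{d−1}(f)] ⊆ ℛ`: each additive component `g` lies in
the `K`-subalgebra generated by the linear forms in `R_{d−1}(f)`, and equivalently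
`R_{d−1}(g) ⊆ R_{d−1}(f)`. -/
theorem regsplit_inside_subring {K : Type*} [Field K] [CharZero K] {r d : ℕ} (hd : 2 ≤ d)
    (f : MvPolynomial (Fin r) K) (hf : f.IsHomogeneous d)
    (G : Set (MvPolynomial (Fin r) K)) (hG : IsRegSplit d f G) :
    ∀ g ∈ G,
      g ∈ Algebra.adjoin K {p : MvPolynomial (Fin r) K |
          ∃ D : MvPolynomial (Fin r) K, D.IsHomogeneous (d - 1) ∧ p = contract D f} ∧
      partials (d - 1) g ≤ partials (d - 1) f := by
  intro g hg
  classical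
  have hghom : g.IsHomogeneous d := ((hG.2.2.1) g hg).2
  have e1 : d - 1 + 1 = d := by omega
  have hker := Aux.ker_Tm_le hd f G hG hg
  have hrow : Aux.RowSp g ≤ Aux.RowSp f := by
    calc Aux.RowSp g
        = Aux.dotB.orthogonal (Aux.dotB.orthogonal (Aux.RowSp g)) :=
          (LinearMap.BilinForm.orthogonal_orthogonal Aux.dotB_nondeg Aux.dotB_refl _).symm
      _ = Aux.dotB.orthogonal (LinearMap.ker (Aux.Tm g)) := by rw [Aux.ker_Tm_eq]
      _ ≤ Aux.dotB.orthogonal (LinearMap.ker (Aux.Tm f)) :=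
          LinearMap.BilinForm.orthogonal_le hker
      _ = Aux.dotB.orthogonal (Aux.dotB.orthogonal (Aux.RowSp f)) := by rw [Aux.ker_Tm_eq]
      _ = Aux.RowSp f :=
          LinearMap.BilinForm.orthogonal_orthogonal Aux.dotB_nondeg Aux.dotB_refl _
  have hfhom : f.IsHomogeneous (d - 1 + 1) := by rw [e1]; exact hf
  have hghom' : g.IsHomogeneous (d - 1 + 1) := by rw [e1]; exact hghom
  have hVle : partials (d - 1) g ≤ partials (d - 1) f := by
    rw [← Aux.map_eps_RowSp hghom', ← Aux.map_eps_RowSp hfhom]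
    exact Submodule.map_mono hrow
  refine ⟨?_, hVle⟩
  have hEmem : g ∈ Algebra.adjoin K
      (Aux.eps '' ((Aux.dotB.orthogonal (LinearMap.ker (Aux.Tm g))) : Set (Fin r → K))) := by
    apply Aux.mem_adjoin_of_deriv_vanish
    intro a ha
    exact LinearMap.mem_ker.mp ha
  have hEmem2 : g ∈ Algebra.adjoin K
      (Aux.eps '' ((Aux.RowSp g : Submodule K (Fin r → K)) : Set (Fin r → K))) :=
    Algebra.adjoin_mono (Set.image_mono (Aux.orth_ker_le g)) hEmem
  have hspan : partials (d - 1) f ≤ Subalgebra.toSubmodule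
      (Algebra.adjoin K {p : MvPolynomial (Fin r) K |
        ∃ D : MvPolynomial (Fin r) K, D.IsHomogeneous (d - 1) ∧ p = contract D f}) := by
    rw [partials, Submodule.span_le]
    intro y hy
    exact Algebra.subset_adjoin hy
  have hfinal : Algebra.adjoin K
      (Aux.eps '' ((Aux.RowSp g : Submodule K (Fin r → K)) : Set (Fin r → K)))
      ≤ Algebra.adjoin K {p : MvPolynomial (Fin r) K |
          ∃ D : MvPolynomial (Fin r) K, D.IsHomogeneous (d - 1) ∧ p = contract D f} := by
    apply Algebra.adjoin_le
    rintro _ ⟨x, hx, rfl⟩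
    have hx1 : Aux.eps x ∈ Submodule.map Aux.eps (Aux.RowSp g) :=
      Submodule.mem_map_of_mem hx
    rw [Aux.map_eps_RowSp hghom'] at hx1
    have hx' : Aux.eps x ∈ partials (d - 1) f := hVle hx1
    exact hspan hx'
  exact hfinal hEmem2

end Kleppe
end

section
/- Let M ⊆ Mat_r(K) be a subset containing the identity matrix I. Then I(M) ⊆ Ǐ(M) = I(M²), where M² = {AB : A, B ∈ M}, and the graded pieces satisfy I(M)_e = Ǐ(M)_e for all e ≥ 3. In particular, if M is closed under matrix multiplication, then I(M) = Ǐ(M). -/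
open MvPolynomial

namespace Kleppe

/-- The determinantal ideal `I(M) = Σ_{A ∈ M} I_2(∂ A∂)`, generated by the entries
`∂_i·(A∂)_j − ∂_j·(A∂)_i` for `A ∈ M`. -/
noncomputable def IM {K : Type*} [CommRing K] {r : ℕ} (M : Set (Matrix (Fin r) (Fin r) K)) :
    Ideal (MvPolynomial (Fin r) K) :=
  Ideal.span {p | ∃ A ∈ M, ∃ i j : Fin r, p = X i * rowOp A j - X j * rowOp A i}

/-- The determinantal ideal `Ǐ(M) = Σ_{A,B ∈ M} I_2(A∂ B∂)`, generated by
`(A∂)_i·(B∂)_j − (A∂)_j·(B∂)_i` for `A, B ∈ M`. -/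
noncomputable def IcheckM {K : Type*} [CommRing K] {r : ℕ} (M : Set (Matrix (Fin r) (Fin r) K)) :
    Ideal (MvPolynomial (Fin r) K) :=
  Ideal.span {p | ∃ A ∈ M, ∃ B ∈ M, ∃ i j : Fin r,
    p = rowOp A i * rowOp B j - rowOp A j * rowOp B i}


noncomputable section AuxProofs

open scoped Classical

variable {K : Type*} [CommRing K] {r : ℕ}

lemma rowOp_one (i : Fin r) : rowOp (1 : Matrix (Fin r) (Fin r) K) i = X i := by
  simp [rowOp, Matrix.one_apply, ite_smul]

lemma rowOp_def (A : Matrix (Fin r) (Fin r) K) (i : Fin r) :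
    rowOp A i = ∑ k, A i k • X k := rfl

lemma rowOp_mulMat (A B : Matrix (Fin r) (Fin r) K) (i : Fin r) :
    rowOp (A * B) i = ∑ k, A i k • rowOp B k := by
  simp only [rowOp, Matrix.mul_apply, Finset.sum_smul, Finset.smul_sum, mul_smul]
  exact Finset.sum_comm

lemma rowOp_isHomogeneous (A : Matrix (Fin r) (Fin r) K) (i : Fin r) :
    (rowOp A i).IsHomogeneous 1 := by
  rw [rowOp_def]
  exact MvPolynomial.IsHomogeneous.sum _ _ _ fun k _ => by
    rw [smul_eq_C_mul]
    simpa using (isHomogeneous_C (Fin r) (A i k)).mul (isHomogeneous_X K k)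

lemma key_identity (A B : Matrix (Fin r) (Fin r) K) (i j : Fin r) :
    rowOp A i * rowOp B j - rowOp A j * rowOp B i =
      ((∑ k, A i k • (X k * rowOp B j - X j * rowOp B k)) -
        ∑ k, A j k • (X k * rowOp B i - X i * rowOp B k)) -
      (X i * rowOp (A * B) j - X j * rowOp (A * B) i) := by
  rw [rowOp_mulMat A B j, rowOp_mulMat A B i, rowOp_def A i, rowOp_def A j]
  simp only [Finset.sum_mul, Finset.mul_sum, smul_mul_assoc, mul_smul_comm, smul_sub,
    Finset.sum_sub_distrib]
  abel

lemma key_identity2 (A B : Matrix (Fin r) (Fin r) K) (i j m : Fin r) :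
    X m * (rowOp A i * rowOp B j - rowOp A j * rowOp B i) =
      rowOp A i * (X m * rowOp B j - X j * rowOp B m) -
      rowOp A j * (X m * rowOp B i - X i * rowOp B m) -
      rowOp B m * (X i * rowOp A j - X j * rowOp A i) := by
  ring

lemma homogeneousComponent_mul_homogeneous (a q : MvPolynomial (Fin r) K) {m : ℕ}
    (hq : q.IsHomogeneous m) (n : ℕ) :
    homogeneousComponent (n + m) (a * q) = homogeneousComponent n a * q := by
  conv_lhs => rw [← sum_homogeneousComponent a]
  rw [Finset.sum_mul, map_sum]
  have hcongr : ∀ i ∈ Finset.range (a.totalDegree + 1),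
      homogeneousComponent (n + m) (homogeneousComponent i a * q)
        = if n = i then homogeneousComponent i a * q else 0 := by
    intro i _
    have h : (homogeneousComponent i a * q).IsHomogeneous (i + m) :=
      (homogeneousComponent_isHomogeneous i a).mul hq
    rw [homogeneousComponent_of_mem ((mem_homogeneousSubmodule _ _).2 h)]
    simp only [show (n + m = i + m) ↔ n = i by omega]
  rw [Finset.sum_congr rfl hcongr, Finset.sum_ite_eq]
  by_cases h : n ∈ Finset.range (a.totalDegree + 1)
  · rw [if_pos h]
  · rw [if_neg h, homogeneousComponent_eq_zero, zero_mul]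
    simp only [Finset.mem_range] at h
    omega

lemma homogeneous_mem_span_X (p : MvPolynomial (Fin r) K) {n : ℕ}
    (hp : p.IsHomogeneous n) (hn : n ≠ 0) :
    p ∈ Ideal.span (Set.range (X : Fin r → MvPolynomial (Fin r) K)) := by
  rw [← Set.image_univ, mem_ideal_span_X_image]
  intro d hd
  have hdeg : d.degree = n := by
    by_contra hne
    exact (MvPolynomial.mem_support_iff.1 hd) (hp.coeff_eq_zero hne)
  by_contra hall
  push_neg at hall
  have : d = 0 := by
    ext i
    simpa using hall i (Set.mem_univ i)
  rw [this, map_zero] at hdeg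
  exact hn hdeg.symm

end AuxProofs

/-- Lemma 2.19. If `I ∈ M ⊆ Mat_r(K)`, then
`I(M) ⊆ Ǐ(M) = I(M²)` and `I(M)_e = Ǐ(M)_e` for all `e ≥ 3`.
In particular, if `M` is closed under multiplication, then `I(M) = Ǐ(M)`. -/
theorem IM_le_IcheckM {K : Type*} [Field K] {r : ℕ}
    (M : Set (Matrix (Fin r) (Fin r) K)) (hM : (1 : Matrix (Fin r) (Fin r) K) ∈ M) :
    IM M ≤ IcheckM M ∧
    IcheckM M = IM (Set.image2 (· * ·) M M) ∧
    (∀ e : ℕ, 3 ≤ e → ∀ p : MvPolynomial (Fin r) K, p.IsHomogeneous e →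
      (p ∈ IM M ↔ p ∈ IcheckM M)) ∧
    ((∀ A ∈ M, ∀ B ∈ M, A * B ∈ M) → IM M = IcheckM M) := by
  classical
  have hgenIM : ∀ (N : Set (Matrix (Fin r) (Fin r) K)), ∀ A ∈ N, ∀ i j : Fin r,
      X i * rowOp A j - X j * rowOp A i ∈ IM N := fun N A hA i j =>
    Ideal.subset_span ⟨A, hA, i, j, rfl⟩
  have hgenIc : ∀ A ∈ M, ∀ B ∈ M, ∀ i j : Fin r,
      rowOp A i * rowOp B j - rowOp A j * rowOp B i ∈ IcheckM M := fun A hA B hB i j =>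
    Ideal.subset_span ⟨A, hA, B, hB, i, j, rfl⟩
  have h1 : IM M ≤ IcheckM M := by
    rw [IM, Ideal.span_le]
    rintro p ⟨A, hA, i, j, rfl⟩
    have := hgenIc 1 hM A hA i j
    rwa [rowOp_one, rowOp_one] at this
  have hM2 : ∀ A ∈ M, A ∈ Set.image2 (· * ·) M M := fun A hA => ⟨A, hA, 1, hM, mul_one A⟩
  have h2 : IcheckM M = IM (Set.image2 (· * ·) M M) := by
    apply le_antisymm
    · rw [IcheckM, Ideal.span_le]
      rintro p ⟨A, hA, B, hB, i, j, rfl⟩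
      rw [key_identity]
      refine sub_mem (sub_mem (Ideal.sum_mem _ fun k _ => ?_)
        (Ideal.sum_mem _ fun k _ => ?_)) (hgenIM (Set.image2 (· * ·) M M) (A * B) ⟨A, hA, B, hB, rfl⟩ i j)
      · rw [smul_eq_C_mul]
        exact Ideal.mul_mem_left _ _ (hgenIM _ B (hM2 B hB) k j)
      · rw [smul_eq_C_mul]
        exact Ideal.mul_mem_left _ _ (hgenIM _ B (hM2 B hB) k i)
    · rw [IM, Ideal.span_le]
      rintro p ⟨C, hC, i, j, rfl⟩
      obtain ⟨A, hA, B, hB, rfl⟩ := hC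
      have hrw : X i * rowOp (A * B) j - X j * rowOp (A * B) i =
          ((∑ k, A i k • (X k * rowOp B j - X j * rowOp B k)) -
            ∑ k, A j k • (X k * rowOp B i - X i * rowOp B k)) -
          (rowOp A i * rowOp B j - rowOp A j * rowOp B i) := by
        have h := key_identity A B i j
        rw [eq_sub_iff_add_eq] at h ⊢
        rw [← h]; ring
      rw [hrw]
      refine sub_mem (sub_mem (Ideal.sum_mem _ fun k _ => ?_)
        (Ideal.sum_mem _ fun k _ => ?_)) (hgenIc A hA B hB i j)
      · rw [smul_eq_C_mul]
        exact Ideal.mul_mem_left _ _ (h1 (hgenIM _ B hB k j))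
      · rw [smul_eq_C_mul]
        exact Ideal.mul_mem_left _ _ (h1 (hgenIM _ B hB k i))
  have hXIc : Ideal.span (Set.range (X : Fin r → MvPolynomial (Fin r) K)) * IcheckM M
      ≤ IM M := by
    rw [IcheckM, Ideal.span_mul_span', Ideal.span_le]
    rintro _ ⟨x, ⟨m, rfl⟩, q, ⟨A, hA, B, hB, i, j, rfl⟩, rfl⟩
    show X m * (rowOp A i * rowOp B j - rowOp A j * rowOp B i) ∈ IM M
    rw [key_identity2]
    exact sub_mem (sub_mem (Ideal.mul_mem_left _ _ (hgenIM _ B hB m j))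
      (Ideal.mul_mem_left _ _ (hgenIM _ B hB m i)))
      (Ideal.mul_mem_left _ _ (hgenIM _ A hA i j))
  have h3 : ∀ e : ℕ, 3 ≤ e → ∀ p : MvPolynomial (Fin r) K, p.IsHomogeneous e →
      (p ∈ IM M ↔ p ∈ IcheckM M) := by
    intro e he p hp
    refine ⟨fun h => h1 h, fun h => ?_⟩
    rw [IcheckM] at h
    obtain ⟨c, hsupp, hsum⟩ := Submodule.mem_span_set.mp h
    have hqhom : ∀ q ∈ c.support, (q : MvPolynomial (Fin r) K).IsHomogeneous 2 := by
      intro q hq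
      obtain ⟨A, _, B, _, i, j, rfl⟩ := hsupp hq
      exact ((rowOp_isHomogeneous A i).mul (rowOp_isHomogeneous B j)).sub
        ((rowOp_isHomogeneous A j).mul (rowOp_isHomogeneous B i))
    have hpe : homogeneousComponent e p = p := by
      rw [homogeneousComponent_of_mem ((mem_homogeneousSubmodule _ _).2 hp), if_pos rfl]
    have hdecomp : p = ∑ q ∈ c.support,
        homogeneousComponent (e - 2) (c q) * q := by
      conv_lhs => rw [← hpe, ← hsum]
      rw [Finsupp.sum, map_sum]
      refine Finset.sum_congr rfl fun q hq => ?_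
      have hcq : c q • q = c q * q := rfl
      have he2 : e = (e - 2) + 2 := by omega
      rw [hcq]
      conv_lhs => rw [he2]
      rw [homogeneousComponent_mul_homogeneous (c q) q (hqhom q hq) (e - 2)]
    rw [hdecomp]
    refine Ideal.sum_mem _ fun q hq => hXIc (Ideal.mul_mem_mul ?_ ?_)
    · exact homogeneous_mem_span_X _ (homogeneousComponent_isHomogeneous _ _) (by omega)
    · exact Ideal.subset_span (hsupp hq)
  refine ⟨h1, h2, h3, fun hclosed => le_antisymm h1 ?_⟩
  rw [h2, IM, Ideal.span_le]
  rintro p ⟨C, hC, i, j, rfl⟩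
  obtain ⟨A, hA, B, hB, rfl⟩ := hC
  exact Ideal.subset_span ⟨A * B, hclosed A hA B hB, i, j, rfl⟩


end Kleppe
end
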